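/- Let s₁ : [1,∞) → (0,1] and s₂ : [1,∞) → [1,∞) be the inverse functions of s - ln s restricted to (0,1] and [1,∞) respectively. Then for every natural n ≥ 1, n! = n^{n+1} e^{-n} ∫₀^∞ e^{-np} (s₂'(1+p) - s₁'(1+p)) dp. -/

import Mathlib

open MeasureTheory Set Real Nat

private noncomputable def ph : ℝ → ℝ := fun s => s - Real.log s

private lemma ph_def (s : ℝ) : ph s = s - Real.log s := rfl

private lemma phi_hasStrictDerivAt {s : ℝ} (hs : 0 < s) :
    HasStrictDerivAt ph (1 - s⁻¹) s :=
  (hasStrictDerivAt_id s).sub (Real.hasStrictDerivAt_log hs.ne')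

private lemma phi_deriv {s : ℝ} (hs : 0 < s) :
    deriv ph s = 1 - s⁻¹ :=
  (phi_hasStrictDerivAt hs).hasDerivAt.deriv

private lemma ph_continuousOn : ContinuousOn ph {(0:ℝ)}ᶜ :=
  continuousOn_id.sub (Real.continuousOn_log)

private lemma phi_anti : StrictAntiOn ph (Ioc 0 1) := by
  apply strictAntiOn_of_deriv_neg (convex_Ioc 0 1)
  · exact ph_continuousOn.mono (fun x hx => ne_of_gt hx.1)
  · intro x hx
    rw [interior_Ioc] at hx
    rw [phi_deriv hx.1]
    have h1 : 1 < x⁻¹ := (one_lt_inv_iff₀).2 ⟨hx.1, hx.2⟩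
    linarith

private lemma phi_mono : StrictMonoOn ph (Ici 1) := by
  apply strictMonoOn_of_deriv_pos (convex_Ici 1)
  · exact ph_continuousOn.mono (fun x hx => by
      intro h; rw [mem_singleton_iff] at h; subst h; exact absurd hx.out (by norm_num))
  · intro x hx
    rw [interior_Ici] at hx
    have hx0 : (0:ℝ) < x := lt_trans one_pos hx
    rw [phi_deriv hx0]
    have : x⁻¹ < 1 := inv_lt_one_of_one_lt₀ hx
    linarith

private lemma base_integral (n : ℕ) (hn : 1 ≤ n) :
    ∫ s in Ioi (0:ℝ), s ^ n * Real.exp (-((n:ℝ) * s)) = (n ! : ℝ) / (n:ℝ) ^ (n + 1) := by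
  have hn0 : (0:ℝ) < n := by exact_mod_cast hn
  have h := Real.integral_rpow_mul_exp_neg_mul_Ioi (a := (n:ℝ) + 1) (r := (n:ℝ))
    (by positivity) hn0
  rw [show ((n:ℝ) + 1 - 1) = (n:ℝ) by ring, Real.Gamma_nat_eq_factorial,
    show ((n:ℝ) + 1) = ((n + 1 : ℕ) : ℝ) by push_cast; ring, Real.rpow_natCast] at h
  rw [show (∫ s in Ioi (0:ℝ), s ^ n * Real.exp (-((n:ℝ) * s)))
        = ∫ s in Ioi (0:ℝ), s ^ ((n:ℝ)) * Real.exp (-((n:ℝ) * s)) from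
      setIntegral_congr_fun measurableSet_Ioi (fun s hs => by rw [Real.rpow_natCast]),
    h, div_pow, one_pow]
  ring

private lemma base_integrable (n : ℕ) (hn : 1 ≤ n) :
    IntegrableOn (fun s : ℝ => s ^ n * Real.exp (-((n:ℝ) * s))) (Ioi 0) := by
  have hn0 : (0:ℝ) < n := by exact_mod_cast hn
  have h := integrableOn_rpow_mul_exp_neg_mul_rpow (p := 1) (s := (n:ℝ)) (b := (n:ℝ))
    (by linarith) one_pos hn0
  refine h.congr_fun (fun x hx => ?_) measurableSet_Ioi
  beta_reduce
  rw [Real.rpow_one, Real.rpow_natCast, neg_mul]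

theorem stmt8 (s₁ s₂ : ℝ → ℝ)
    (h₁ : ∀ t ∈ Ici (1 : ℝ), s₁ t ∈ Ioc (0 : ℝ) 1 ∧ s₁ t - Real.log (s₁ t) = t)
    (h₂ : ∀ t ∈ Ici (1 : ℝ), s₂ t ∈ Ici (1 : ℝ) ∧ s₂ t - Real.log (s₂ t) = t)
    (n : ℕ) (hn : 1 ≤ n) :
    (n ! : ℝ) = (n : ℝ) ^ (n + 1) * Real.exp (-(n : ℝ)) *
      ∫ p in Ioi (0 : ℝ),
        Real.exp (-(n : ℝ) * p) * (deriv s₂ (1 + p) - deriv s₁ (1 + p)) := by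
  have hn0 : (0:ℝ) < n := by exact_mod_cast hn
  have ph1 : ph 1 = 1 := by simp [ph_def]
  -- basic facts about s₁ and s₂
  have hs₁lt : ∀ t : ℝ, 1 < t → s₁ t ∈ Ioo (0:ℝ) 1 := by
    intro t ht
    obtain ⟨hm, he⟩ := h₁ t (le_of_lt ht)
    refine ⟨hm.1, lt_of_le_of_ne hm.2 (fun h => ?_)⟩
    rw [h] at he; simp at he; linarith
  have hs₂gt : ∀ t : ℝ, 1 < t → 1 < s₂ t := by
    intro t ht
    obtain ⟨hm, he⟩ := h₂ t (le_of_lt ht)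
    refine lt_of_le_of_ne hm (fun h => ?_)
    rw [← h] at he; simp at he; linarith
  -- derivatives
  have hs₂d : ∀ t : ℝ, 1 < t → HasDerivAt s₂ ((1 - (s₂ t)⁻¹)⁻¹) t := by
    intro t ht
    have ha1 : 1 < s₂ t := hs₂gt t ht
    have hpha : ph (s₂ t) = t := (h₂ t (le_of_lt ht)).2
    have hne : (1 - (s₂ t)⁻¹) ≠ 0 := by
      have : (s₂ t)⁻¹ < 1 := inv_lt_one_of_one_lt₀ ha1
      intro h; linarith [sub_eq_zero.mp h]
    have hev : ∀ᶠ x in nhds (s₂ t), s₂ (ph x) = x := by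
      filter_upwards [Ioi_mem_nhds ha1] with x hx
      have hx1 : 1 < x := hx
      have hphx : 1 < ph x := by
        have := phi_mono (le_refl (1:ℝ)) (le_of_lt hx1) hx1
        rwa [ph1] at this
      obtain ⟨hm, he⟩ := h₂ (ph x) (le_of_lt hphx)
      exact phi_mono.injOn hm (le_of_lt hx1) he
    have := ((phi_hasStrictDerivAt (lt_trans one_pos ha1)).to_local_left_inverse hne hev)
    rw [hpha] at this
    exact this.hasDerivAt
  have hs₁d : ∀ t : ℝ, 1 < t → HasDerivAt s₁ ((1 - (s₁ t)⁻¹)⁻¹) t := by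
    intro t ht
    have ha1 : s₁ t ∈ Ioo (0:ℝ) 1 := hs₁lt t ht
    have hpha : ph (s₁ t) = t := (h₁ t (le_of_lt ht)).2
    have hne : (1 - (s₁ t)⁻¹) ≠ 0 := by
      have : 1 < (s₁ t)⁻¹ := (one_lt_inv_iff₀).2 ⟨ha1.1, ha1.2⟩
      intro h; linarith [sub_eq_zero.mp h]
    have hev : ∀ᶠ x in nhds (s₁ t), s₁ (ph x) = x := by
      filter_upwards [Ioo_mem_nhds ha1.1 ha1.2] with x hx
      have hphx : 1 < ph x := by
        have := phi_anti ⟨hx.1, le_of_lt hx.2⟩ (by norm_num : (1:ℝ) ∈ Ioc (0:ℝ) 1) hx.2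
        rwa [ph1] at this
      obtain ⟨hm, he⟩ := h₁ (ph x) (le_of_lt hphx)
      exact phi_anti.injOn hm ⟨hx.1, le_of_lt hx.2⟩ he
    have := ((phi_hasStrictDerivAt ha1.1).to_local_left_inverse hne hev)
    rw [hpha] at this
    exact this.hasDerivAt
  -- images
  have img₂ : s₂ '' Ioi 1 = Ioi 1 := by
    ext s
    constructor
    · rintro ⟨t, ht, rfl⟩; exact hs₂gt t ht
    · intro hs
      have hs1 : 1 < s := hs
      have hphs : 1 < ph s := by
        have := phi_mono (le_refl (1:ℝ)) (le_of_lt hs1) hs1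
        rwa [ph1] at this
      refine ⟨ph s, hphs, ?_⟩
      obtain ⟨hm, he⟩ := h₂ (ph s) (le_of_lt hphs)
      exact phi_mono.injOn hm (le_of_lt hs1) he
  have img₁ : s₁ '' Ioi 1 = Ioo 0 1 := by
    ext s
    constructor
    · rintro ⟨t, ht, rfl⟩; exact hs₁lt t ht
    · intro hs
      have hphs : 1 < ph s := by
        have := phi_anti ⟨hs.1, le_of_lt hs.2⟩ (by norm_num : (1:ℝ) ∈ Ioc (0:ℝ) 1) hs.2
        rwa [ph1] at this
      refine ⟨ph s, hphs, ?_⟩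
      obtain ⟨hm, he⟩ := h₁ (ph s) (le_of_lt hphs)
      exact phi_anti.injOn hm ⟨hs.1, le_of_lt hs.2⟩ he
  -- injectivity
  have inj₂ : InjOn s₂ (Ioi 1) := by
    intro t ht t' ht' h
    have e1 : ph (s₂ t) = t := (h₂ t (le_of_lt (show (1:ℝ) < t from ht))).2
    have e2 : ph (s₂ t') = t' := (h₂ t' (le_of_lt (show (1:ℝ) < t' from ht'))).2
    rw [← e1, ← e2, h]
  have inj₁ : InjOn s₁ (Ioi 1) := by
    intro t ht t' ht' h
    have e1 : ph (s₁ t) = t := (h₁ t (le_of_lt (show (1:ℝ) < t from ht))).2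
    have e2 : ph (s₁ t') = t' := (h₁ t' (le_of_lt (show (1:ℝ) < t' from ht'))).2
    rw [← e1, ← e2, h]
  set g : ℝ → ℝ := fun s => s ^ n * Real.exp (-((n:ℝ) * s)) with hgdef
  -- g ∘ s relations
  have gval : ∀ s : ℝ, 0 < s → g s = Real.exp (-((n:ℝ) * ph s)) := by
    intro s hs
    have : Real.exp (-((n:ℝ) * ph s)) = Real.exp ((n:ℝ) * Real.log s) * Real.exp (-((n:ℝ) * s)) := by
      rw [← Real.exp_add]; congr 1; rw [ph_def]; ring
    rw [this, Real.exp_nat_mul, Real.exp_log hs]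
  -- derivatives within
  have hd₂ : ∀ x ∈ Ioi (1:ℝ), HasDerivWithinAt s₂ (deriv s₂ x) (Ioi 1) x := by
    intro x hx
    have h := hs₂d x hx
    rw [h.deriv]
    exact h.hasDerivWithinAt
  have hd₁ : ∀ x ∈ Ioi (1:ℝ), HasDerivWithinAt s₁ (deriv s₁ x) (Ioi 1) x := by
    intro x hx
    have h := hs₁d x hx
    rw [h.deriv]
    exact h.hasDerivWithinAt
  have intg : IntegrableOn g (Ioi 0) := base_integrable n hn
  -- integrability of transformed integrands
  have int₂ : IntegrableOn (fun t => |deriv s₂ t| • g (s₂ t)) (Ioi 1) := by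
    rw [← integrableOn_image_iff_integrableOn_abs_deriv_smul measurableSet_Ioi hd₂ inj₂ g, img₂]
    exact intg.mono_set (Ioi_subset_Ioi zero_le_one)
  have int₁ : IntegrableOn (fun t => |deriv s₁ t| • g (s₁ t)) (Ioi 1) := by
    rw [← integrableOn_image_iff_integrableOn_abs_deriv_smul measurableSet_Ioi hd₁ inj₁ g, img₁]
    exact intg.mono_set Ioo_subset_Ioi_self
  have E2 : ∫ s in Ioi (1:ℝ), g s = ∫ t in Ioi (1:ℝ), |deriv s₂ t| • g (s₂ t) := by
    conv_lhs => rw [← img₂]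
    exact integral_image_eq_integral_abs_deriv_smul measurableSet_Ioi hd₂ inj₂ g
  have E1 : ∫ s in Ioo (0:ℝ) 1, g s = ∫ t in Ioi (1:ℝ), |deriv s₁ t| • g (s₁ t) := by
    conv_lhs => rw [← img₁]
    exact integral_image_eq_integral_abs_deriv_smul measurableSet_Ioi hd₁ inj₁ g
  have split : ∫ s in Ioi (0:ℝ), g s = (∫ s in Ioo (0:ℝ) 1, g s) + ∫ s in Ioi (1:ℝ), g s := by
    rw [← Ioo_union_Ici_eq_Ioi (zero_lt_one), setIntegral_union, integral_Ici_eq_integral_Ioi]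
    · rw [Set.disjoint_left]
      rintro a ⟨_, ha2⟩ ha3
      exact absurd ha3 (not_le.mpr ha2)
    · exact measurableSet_Ici
    · exact intg.mono_set Ioo_subset_Ioi_self
    · exact intg.mono_set (Ici_subset_Ioi.mpr zero_lt_one)
  -- combine
  have comb : ∫ s in Ioi (0:ℝ), g s
      = ∫ t in Ioi (1:ℝ), Real.exp (-((n:ℝ) * t)) * (deriv s₂ t - deriv s₁ t) := by
    rw [split, E1, E2, ← integral_add int₁ int₂]
    refine setIntegral_congr_fun measurableSet_Ioi (fun t ht => ?_)
    have ht1 : 1 < t := ht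
    have ha₁ : s₁ t ∈ Ioo (0:ℝ) 1 := hs₁lt t ht1
    have ha₂ : 1 < s₂ t := hs₂gt t ht1
    have d₁ : deriv s₁ t = (1 - (s₁ t)⁻¹)⁻¹ := (hs₁d t ht1).deriv
    have d₂ : deriv s₂ t = (1 - (s₂ t)⁻¹)⁻¹ := (hs₂d t ht1).deriv
    have hd₁neg : deriv s₁ t < 0 := by
      rw [d₁]
      have : 1 < (s₁ t)⁻¹ := (one_lt_inv_iff₀).2 ⟨ha₁.1, ha₁.2⟩
      exact inv_lt_zero.mpr (by linarith)
    have hd₂pos : 0 < deriv s₂ t := by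
      rw [d₂]
      have h1 : (s₂ t)⁻¹ < 1 := inv_lt_one_of_one_lt₀ ha₂
      exact inv_pos.mpr (by linarith)
    have g₁ : g (s₁ t) = Real.exp (-((n:ℝ) * t)) := by
      rw [gval (s₁ t) ha₁.1, ph_def, (h₁ t (le_of_lt ht1)).2]
    have g₂ : g (s₂ t) = Real.exp (-((n:ℝ) * t)) := by
      rw [gval (s₂ t) (lt_trans one_pos ha₂), ph_def, (h₂ t (le_of_lt ht1)).2]
    rw [g₁, g₂, abs_of_neg hd₁neg, abs_of_pos hd₂pos, smul_eq_mul, smul_eq_mul]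
    ring
  -- shift by 1
  have hshift : ∫ t in Ioi (1:ℝ), Real.exp (-((n:ℝ) * t)) * (deriv s₂ t - deriv s₁ t)
      = ∫ p in Ioi (0:ℝ),
          Real.exp (-((n:ℝ) * (1 + p))) * (deriv s₂ (1 + p) - deriv s₁ (1 + p)) := by
    have himg : (fun p : ℝ => 1 + p) '' Ioi 0 = Ioi 1 := by
      rw [image_const_add_Ioi]; norm_num
    have := integral_image_eq_integral_abs_deriv_smul (s := Ioi (0:ℝ))
      (f := fun p : ℝ => 1 + p) (f' := fun _ => (1:ℝ)) measurableSet_Ioi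
      (fun x _ => ((hasDerivAt_id x).const_add 1).hasDerivWithinAt)
      ((add_right_injective (1:ℝ)).injOn)
      (fun t => Real.exp (-((n:ℝ) * t)) * (deriv s₂ t - deriv s₁ t))
    rw [himg] at this
    rw [this]
    refine setIntegral_congr_fun measurableSet_Ioi (fun p hp => ?_)
    simp
  have final : ∫ p in Ioi (0:ℝ),
        Real.exp (-((n:ℝ) * (1 + p))) * (deriv s₂ (1 + p) - deriv s₁ (1 + p))
      = Real.exp (-(n:ℝ)) * ∫ p in Ioi (0:ℝ),
          Real.exp (-(n:ℝ) * p) * (deriv s₂ (1 + p) - deriv s₁ (1 + p)) := by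
    rw [← integral_const_mul]
    refine setIntegral_congr_fun measurableSet_Ioi (fun p hp => ?_)
    rw [← mul_assoc, ← Real.exp_add]
    ring_nf
  have hbase := base_integral n hn
  rw [comb] at hbase
  rw [hshift, final] at hbase
  rw [eq_div_iff (by positivity : ((n:ℝ) ^ (n+1)) ≠ 0)] at hbase
  rw [← hbase]
  ring
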